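/- With f as in the previous context (β_j, ε_j > 0, C > 0, I = (−∞, min_j α_j)): lim_{t → −∞} f(t) = −C < 0 and lim_{t → (min_j α_j)⁻} f(t) = +∞. Combined with strict monotonicity of f on I, the equation f(t) = 0 has a unique solution t* ∈ I. -/

import Mathlib

open Set Finset Filter

lemma aux_sqrt_gt {β ε s : ℝ} (hβ : 0 < β) (hε : 0 < ε) (hs : 0 < s) :
    β < Real.sqrt (β^2 + 4*β*ε*s) := by
  rw [Real.lt_sqrt hβ.le]; nlinarith [mul_pos (mul_pos hβ hε) hs]

lemma aux_term_eq {β ε s : ℝ} (hβ : 0 < β) (hε : 0 < ε) (hs : 0 < s) :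
    (β + Real.sqrt (β^2 + 4*β*ε*s)) / (2*s) =
      2*β*ε / (Real.sqrt (β^2 + 4*β*ε*s) - β) := by
  have hd := aux_sqrt_gt hβ hε hs
  have hd2 : Real.sqrt (β^2 + 4*β*ε*s) ^ 2 = β^2 + 4*β*ε*s :=
    Real.sq_sqrt (by positivity)
  set d := Real.sqrt (β^2 + 4*β*ε*s)
  rw [div_eq_div_iff (by positivity) (by linarith)]
  nlinarith

lemma aux_sqrt_tendsto_atTop : Tendsto Real.sqrt atTop atTop :=
  tendsto_atTop_atTop_of_monotone (fun _ _ h => Real.sqrt_le_sqrt h)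
    (fun b => ⟨b^2, by rw [Real.sqrt_sq_eq_abs]; exact le_abs_self b⟩)

theorem stmt_7 (m : ℕ) (hm : 1 ≤ m) (β ε α : Fin m → ℝ)
    (hβ : ∀ j, 0 < β j) (hε : ∀ j, 0 < ε j) (C : ℝ) (hC : 0 < C)
    (f : ℝ → ℝ)
    (hf : ∀ t, f t = (∑ j, (β j + Real.sqrt ((β j) ^ 2 + 4 * β j * ε j * (α j - t))) /
        (2 * (α j - t))) - C) :
    Tendsto f atBot (nhds (-C)) ∧
    Tendsto f (nhdsWithin (Finset.univ.inf' ⟨⟨0, hm⟩, Finset.mem_univ _⟩ α)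
      (Iio (Finset.univ.inf' ⟨⟨0, hm⟩, Finset.mem_univ _⟩ α))) atTop ∧
    ∃! t : ℝ, t ∈ Iio (Finset.univ.inf' ⟨⟨0, hm⟩, Finset.mem_univ _⟩ α) ∧ f t = 0 := by
  set t₀ := Finset.univ.inf' ⟨⟨0, hm⟩, Finset.mem_univ _⟩ α with ht₀def
  have ht₀le : ∀ j, t₀ ≤ α j := fun j => Finset.inf'_le _ (Finset.mem_univ j)
  obtain ⟨j0, -, hj0⟩ := Finset.exists_mem_eq_inf' (⟨⟨0, hm⟩, Finset.mem_univ _⟩ :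
    (Finset.univ : Finset (Fin m)).Nonempty) α
  set g : Fin m → ℝ → ℝ := fun j t =>
    2*β j*ε j / (Real.sqrt ((β j)^2 + 4*β j*ε j*(α j - t)) - β j) with hgdef
  have hfg : ∀ t, t < t₀ → f t = (∑ j, g j t) - C := by
    intro t ht
    rw [hf]
    congr 1
    refine Finset.sum_congr rfl fun j _ => ?_
    have hs : 0 < α j - t := by have := ht₀le j; linarith
    simpa using aux_term_eq (hβ j) (hε j) hs
  have hgpos : ∀ j t, t < α j → 0 < g j t := by
    intro j t ht
    have h1 := aux_sqrt_gt (hβ j) (hε j) (by linarith : (0:ℝ) < α j - t)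
    have hb := hβ j; have he := hε j
    exact div_pos (by positivity) (by linarith)
  -- Part 1: limit at -∞
  have part1 : Tendsto f atBot (nhds (-C)) := by
    have hglim : ∀ j, Tendsto (g j) atBot (nhds 0) := by
      intro j
      have hb := hβ j; have he := hε j
      have hD : Tendsto (fun t => (β j)^2 + 4*β j*ε j*(α j - t)) atBot atTop := by
        apply tendsto_atTop_add_const_left
        have h1 : Tendsto (fun t : ℝ => α j - t) atBot atTop := by
          apply tendsto_atTop_add_const_left
          exact tendsto_neg_atBot_atTop
        exact h1.const_mul_atTop (by positivity)
      have hS : Tendsto (fun t => Real.sqrt ((β j)^2 + 4*β j*ε j*(α j - t)) - β j)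
          atBot atTop :=
        tendsto_atTop_add_const_right _ _ (aux_sqrt_tendsto_atTop.comp hD)
      exact tendsto_const_nhds.div_atTop hS
    have hsum : Tendsto (fun t => (∑ j, g j t) - C) atBot (nhds (-C)) := by
      have := (tendsto_finset_sum Finset.univ fun j _ => hglim j).sub
        (tendsto_const_nhds (x := C))
      simpa using this
    refine hsum.congr' ?_
    filter_upwards [eventually_lt_atBot t₀] with t ht
    exact (hfg t ht).symm
  -- Part 2: limit at t₀ from the left
  have part2 : Tendsto f (nhdsWithin t₀ (Iio t₀)) atTop := by
    have hden : Tendsto (fun t => Real.sqrt ((β j0)^2 + 4*β j0*ε j0*(α j0 - t)) - β j0)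
        (nhdsWithin t₀ (Iio t₀)) (nhdsWithin 0 (Ioi 0)) := by
      rw [tendsto_nhdsWithin_iff]
      constructor
      · have hc : Continuous (fun t => Real.sqrt ((β j0)^2 + 4*β j0*ε j0*(α j0 - t)) - β j0) := by
          fun_prop
        have hv : Real.sqrt ((β j0)^2 + 4*β j0*ε j0*(α j0 - t₀)) - β j0 = 0 := by
          have h0 : α j0 - t₀ = 0 := by rw [← hj0]; exact sub_self _
          rw [h0]
          simp [Real.sqrt_sq (hβ j0).le]
        have := (hc.tendsto t₀).mono_left (nhdsWithin_le_nhds (s := Set.Iio t₀))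
        rwa [hv] at this
      · filter_upwards [self_mem_nhdsWithin] with t ht
        have h1 : t < α j0 := by rw [← hj0]; exact ht
        have := aux_sqrt_gt (hβ j0) (hε j0) (by linarith : (0:ℝ) < α j0 - t)
        simp only [Set.mem_Ioi]; linarith
    have htop : Tendsto (g j0) (nhdsWithin t₀ (Iio t₀)) atTop := by
      have hinv := tendsto_inv_nhdsGT_zero.comp hden
      have h2 := hinv.const_mul_atTop (show (0:ℝ) < 2*β j0*ε j0 by
        have := hβ j0; have := hε j0; positivity)
      refine h2.congr fun t => ?_
      simp [hgdef, div_eq_mul_inv, Function.comp]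
    have hmain : Tendsto (fun t => g j0 t - C) (nhdsWithin t₀ (Iio t₀)) atTop :=
      tendsto_atTop_add_const_right _ _ htop
    refine tendsto_atTop_mono' _ ?_ hmain
    filter_upwards [self_mem_nhdsWithin] with t ht
    rw [hfg t ht]
    have hsum_le : g j0 t ≤ ∑ j, g j t :=
      Finset.single_le_sum (f := fun j => g j t)
        (fun j _ => (hgpos j t (lt_of_lt_of_le ht (ht₀le j))).le) (Finset.mem_univ j0)
    linarith
  -- strict monotonicity
  have hmono : StrictMonoOn f (Iio t₀) := by
    intro a ha b hb hab
    simp only [Set.mem_Iio] at ha hb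
    rw [hfg a ha, hfg b hb]
    have hlt : (∑ j, g j a) < ∑ j, g j b := by
      refine Finset.sum_lt_sum_of_nonempty ⟨j0, Finset.mem_univ j0⟩ fun j _ => ?_
      have hbj := hβ j; have hej := hε j
      have hsa : 0 < α j - a := by have := ht₀le j; linarith
      have hsb : 0 < α j - b := by have := ht₀le j; linarith
      have hdb := aux_sqrt_gt (hβ j) (hε j) hsb
      have hslt : Real.sqrt ((β j)^2 + 4*β j*ε j*(α j - b)) <
          Real.sqrt ((β j)^2 + 4*β j*ε j*(α j - a)) := by
        apply Real.sqrt_lt_sqrt (by nlinarith [mul_pos (mul_pos hbj hej) hsb, sq_nonneg (β j)])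
        nlinarith [mul_pos (mul_pos hbj hej) (sub_pos.mpr hab)]
      exact div_lt_div_of_pos_left (by positivity) (by linarith) (by linarith)
    linarith
  refine ⟨part1, part2, ?_⟩
  -- existence
  obtain ⟨a, ha1, ha2⟩ := ((part1.eventually_lt_const (show -C < 0 by linarith)).and
    (eventually_lt_atBot t₀)).exists
  have hev : ∀ᶠ t in nhdsWithin t₀ (Iio t₀), (0 < f t ∧ a < t) ∧ t ∈ Set.Iio t₀ :=
    ((part2.eventually (eventually_gt_atTop 0)).and
      ((eventually_gt_nhds ha2).filter_mono nhdsWithin_le_nhds)).and self_mem_nhdsWithin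
  obtain ⟨b, ⟨hbpos, hba⟩, hbt⟩ := hev.exists
  simp only [Set.mem_Iio] at hbt
  have hcont : ContinuousOn f (Set.Icc a b) := by
    have hfe : f = fun t => (∑ j, (β j + Real.sqrt ((β j) ^ 2 + 4 * β j * ε j * (α j - t))) /
        (2 * (α j - t))) - C := funext hf
    rw [hfe]
    apply ContinuousOn.sub _ continuousOn_const
    apply continuousOn_finset_sum
    intro j _
    apply ContinuousOn.div (by fun_prop) (by fun_prop)
    intro t ht
    have : t < α j := lt_of_le_of_lt ht.2 (lt_of_lt_of_le hbt (ht₀le j))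
    have : (0:ℝ) < 2 * (α j - t) := by linarith
    exact ne_of_gt this
  obtain ⟨c, hcmem, hc0⟩ := intermediate_value_Icc hba.le hcont ⟨ha1.le, hbpos.le⟩
  have hcI : c ∈ Set.Iio t₀ := lt_of_le_of_lt hcmem.2 hbt
  refine ⟨c, ⟨hcI, hc0⟩, ?_⟩
  rintro y ⟨hy1, hy2⟩
  exact hmono.injOn hy1 hcI (by rw [hy2, hc0])
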